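/- Fix n1, n2 ≥ 1 and j ∈ [n1], and let Ω be a nonempty open subset of the space ℝ^{n2×n1} × ℝ^{n2} of pairs (W2, b2). There is no twice continuously differentiable function C : Ω → ℝ satisfying, for all (W2, b2) ∈ Ω and all i ∈ [n2], both ∂C/∂(W2)_{ij} = 0 and ∂C/∂(b2)_i = −(W2)_{ij}. (Consequently, the continuous translation symmetry of hiding parameters does not induce a conserved quantity of gradient flow.) -/

import Mathlib

open Filter Topology


/-- on any nonempty open set `Ω` of pairs `(W2, b2)`, there is no C² function
`C` whose partial derivative in each `(W2)_{ij}`-direction vanishes while its partial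
derivative in each `(b2)_i`-direction equals `−(W2)_{ij}`. Hence the continuous translation
symmetry of hiding parameters induces no conserved quantity of gradient flow. -/
theorem no_conserved_quantity_for_translation_symmetry {n1 n2 : ℕ}
    (hn1 : 1 ≤ n1) (hn2 : 1 ≤ n2) (j : Fin n1)
    (Ω : Set (((Fin n2 × Fin n1) → ℝ) × ((Fin n2) → ℝ)))
    (hopen : IsOpen Ω) (hne : Ω.Nonempty) :
    ¬ ∃ C : (((Fin n2 × Fin n1) → ℝ) × ((Fin n2) → ℝ)) → ℝ,
        ContDiffOn ℝ 2 C Ω ∧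
        ∀ p ∈ Ω, ∀ i : Fin n2,
          fderiv ℝ C p ((Pi.single (i, j) 1 : (Fin n2 × Fin n1) → ℝ), 0) = 0 ∧
          fderiv ℝ C p (0, (Pi.single i 1 : (Fin n2) → ℝ)) = -(p.1 (i, j)) := by
  rintro ⟨C, hC, hder⟩
  obtain ⟨p, hp⟩ := hne
  have i : Fin n2 := ⟨0, hn2⟩
  set u : (((Fin n2 × Fin n1) → ℝ) × ((Fin n2) → ℝ)) :=
    ((Pi.single (i, j) 1 : (Fin n2 × Fin n1) → ℝ), 0) with hu
  set v : (((Fin n2 × Fin n1) → ℝ) × ((Fin n2) → ℝ)) :=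
    (0, (Pi.single i 1 : (Fin n2) → ℝ)) with hv
  have hΩnhds : Ω ∈ 𝓝 p := hopen.mem_nhds hp
  have hf : ∀ᶠ y in 𝓝 p, HasFDerivAt C (fderiv ℝ C y) y := by
    filter_upwards [hopen.mem_nhds hp] with y hy
    exact ((hC.differentiableOn (by norm_num)).differentiableAt
      (hopen.mem_nhds hy)).hasFDerivAt
  have hC2 : ContDiffAt ℝ 2 C p := hC.contDiffAt hΩnhds
  have hfd : DifferentiableAt ℝ (fderiv ℝ C) p := by
    have h1 : ContDiffAt ℝ 1 (fderiv ℝ C) p := by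
      have := hC2.fderiv_right (m := 1) (by norm_num)
      exact this
    exact h1.differentiableAt one_ne_zero
  set f'' := fderiv ℝ (fderiv ℝ C) p with hf''
  have hsym := second_derivative_symmetric_of_eventually hf hfd.hasFDerivAt u v
  -- compute f'' u v = -1
  have hcomp : ∀ w, HasFDerivAt (fun y => fderiv ℝ C y w)
      ((ContinuousLinearMap.apply ℝ ℝ w).comp f'') p :=
    fun w => (ContinuousLinearMap.apply ℝ ℝ w).hasFDerivAt.comp p hfd.hasFDerivAt
  have huv : f'' u v = -1 := by
    set L : (((Fin n2 × Fin n1) → ℝ) × ((Fin n2) → ℝ)) →L[ℝ] ℝ :=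
      -((ContinuousLinearMap.proj (i, j)).comp
        (ContinuousLinearMap.fst ℝ ((Fin n2 × Fin n1) → ℝ) ((Fin n2) → ℝ))) with hL
    have hL' : HasFDerivAt (fun y : (((Fin n2 × Fin n1) → ℝ) × ((Fin n2) → ℝ)) =>
        fderiv ℝ C y v) L p := by
      have hLf : HasFDerivAt (fun y : (((Fin n2 × Fin n1) → ℝ) × ((Fin n2) → ℝ)) =>
          L y) L p := L.hasFDerivAt
      apply hLf.congr_of_eventuallyEq
      filter_upwards [hΩnhds] with y hy
      have := (hder y hy i).2
      simp only [hL, hv] at this ⊢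
      simpa using this
    have heq : (ContinuousLinearMap.apply ℝ ℝ v).comp f'' = L :=
      (hcomp v).unique hL'
    have : ((ContinuousLinearMap.apply ℝ ℝ v).comp f'') u = L u := by rw [heq]
    simp only [ContinuousLinearMap.comp_apply, ContinuousLinearMap.apply_apply] at this
    rw [this]
    simp [hL, hu]
  have hvu : f'' v u = 0 := by
    have hL' : HasFDerivAt (fun y : (((Fin n2 × Fin n1) → ℝ) × ((Fin n2) → ℝ)) =>
        fderiv ℝ C y u) (0 : (((Fin n2 × Fin n1) → ℝ) × ((Fin n2) → ℝ)) →L[ℝ] ℝ) p := by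
      apply (hasFDerivAt_const (0 : ℝ) p).congr_of_eventuallyEq
      filter_upwards [hΩnhds] with y hy
      exact (hder y hy i).1
    have heq : (ContinuousLinearMap.apply ℝ ℝ u).comp f'' = 0 :=
      (hcomp u).unique hL'
    have : ((ContinuousLinearMap.apply ℝ ℝ u).comp f'') v = 0 := by rw [heq]; rfl
    simpa using this
  rw [huv, hvu] at hsym
  norm_num at hsym
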